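/- Let Ω ⊆ ℝ be an open convex bounded set, let Y = c₀ (the Banach space of real sequences converging to zero with the supremum norm), K = c₀⁺ = {x = (x_i) ∈ c₀ : x_i ≥ 0 for all i}, and let k = (k₁, k₂, …) ∈ c₀⁺. Suppose f : Ω → c₀ is given by f(x) = (f₁(x)k₁, f₂(x)k₂, …), where for each i, f_i(x) = u₁ⁱ(x) + u₂ⁱ(x) with u₁ⁱ convex on Ω, u₂ⁱ ∈ C²(Ω), and sup_i ‖D²u₂ⁱ‖_∞ ≤ C for some constant C ≥ 0. Then f is strongly 2-k-paraconvex on Ω, i.e. there is C' ≥ 0 such that f(λx + (1−λ)y) ≤_K λf(x) + (1−λ)f(y) + C'·min{λ,1−λ}·|x−y|²·k for all x, y ∈ Ω and λ ∈ [0,1]. -/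

import Mathlib

open Filter Topology Set ZeroAtInfty

/-- Let `Ω ⊆ ℝ` be an open convex bounded set, `Y = c₀` (realized as
`C₀(ℕ, ℝ)`, sequences tending to `0` with the sup norm), `K = c₀⁺` the cone of
coordinatewise-nonnegative elements, and `k ∈ c₀⁺`. Suppose `f : Ω → c₀` is given
coordinatewise by `f(x)ᵢ = fᵢ(x)·kᵢ` with `fᵢ = u₁ⁱ + u₂ⁱ`, where `u₁ⁱ` is convex on `Ω`,
`u₂ⁱ ∈ C²(Ω)` and `|D²u₂ⁱ| ≤ C` on `Ω` uniformly in `i`. Then `f` is strongly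
`2`-`k`-paraconvex on `Ω`: there is `C' ≥ 0` with
`f(λx+(1−λ)y) ≤_K λf(x) + (1−λ)f(y) + C'·min{λ,1−λ}·|x−y|²·k` on `Ω`. -/
theorem c0_example_strongly_two_paraconvex
    (Ω : Set ℝ) (hΩopen : IsOpen Ω) (hΩconv : Convex ℝ Ω)
    (hΩbdd : Bornology.IsBounded Ω)
    (k : C₀(ℕ, ℝ)) (hk : ∀ i : ℕ, 0 ≤ k i)
    (u₁ u₂ : ℕ → ℝ → ℝ)
    (hu₁conv : ∀ i : ℕ, ConvexOn ℝ Ω (u₁ i))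
    (hu₂smooth : ∀ i : ℕ, ContDiffOn ℝ 2 (u₂ i) Ω)
    (C : ℝ) (hC : 0 ≤ C)
    (hu₂bdd : ∀ i : ℕ, ∀ x ∈ Ω, |deriv (deriv (u₂ i)) x| ≤ C)
    (f : ℝ → C₀(ℕ, ℝ))
    (hf : ∀ x ∈ Ω, ∀ i : ℕ, f x i = (u₁ i x + u₂ i x) * k i) :
    ∃ C' : ℝ, 0 ≤ C' ∧ ∀ x ∈ Ω, ∀ y ∈ Ω, ∀ l : ℝ, 0 ≤ l → l ≤ 1 → ∀ i : ℕ,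
      0 ≤ (l • f x + (1 - l) • f y + (C' * min l (1 - l) * |x - y| ^ 2) • k
            - f (l * x + (1 - l) * y)) i := by
  refine ⟨C, hC, fun x hx y hy l hl0 hl1 i => ?_⟩
  have hl1' : 0 ≤ 1 - l := by linarith
  have hz : l * x + (1 - l) * y ∈ Ω := hΩconv hx hy hl0 hl1' (by ring)
  -- convexity of u₂ i + C/2 * x^2
  have hd1 : DifferentiableOn ℝ (u₂ i) Ω := (hu₂smooth i).differentiableOn two_ne_zero
  have hd2 : ContDiffOn ℝ 1 (deriv (u₂ i)) Ω :=
    (hu₂smooth i).deriv_of_isOpen hΩopen (by norm_num)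
  have hderiv_eq : ∀ w ∈ Ω, deriv (fun t => u₂ i t + C / 2 * t ^ 2) w
      = deriv (u₂ i) w + C * w := by
    intro w hw
    have hdw : DifferentiableAt ℝ (u₂ i) w := hd1.differentiableAt (hΩopen.mem_nhds hw)
    have hq : HasDerivAt (fun t : ℝ => C / 2 * t ^ 2) (C / 2 * (2 * w)) w := by
      simpa using (hasDerivAt_pow 2 w).const_mul (C / 2)
    rw [deriv_fun_add hdw hq.differentiableAt, hq.deriv]
    ring
  have hgconv : ConvexOn ℝ Ω (fun t => u₂ i t + C / 2 * t ^ 2) := by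
    apply convexOn_of_deriv2_nonneg hΩconv
    · exact (hd1.continuousOn).add ((continuous_const.mul (continuous_pow 2)).continuousOn)
    · rw [hΩopen.interior_eq]
      exact hd1.add ((differentiable_const _ |>.mul (differentiable_pow 2)).differentiableOn)
    · rw [hΩopen.interior_eq]
      refine DifferentiableOn.congr ?_ hderiv_eq
      exact (hd2.differentiableOn one_ne_zero).add
        ((differentiable_const _ |>.mul differentiable_fun_id).differentiableOn)
    · rw [hΩopen.interior_eq]
      intro w hw
      have heq : deriv (fun t => u₂ i t + C / 2 * t ^ 2)
          =ᶠ[𝓝 w] fun t => deriv (u₂ i) t + C * t :=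
        Filter.eventuallyEq_of_mem (hΩopen.mem_nhds hw) hderiv_eq
      have hdw2 : DifferentiableAt ℝ (deriv (u₂ i)) w :=
        (hd2.differentiableOn one_ne_zero).differentiableAt (hΩopen.mem_nhds hw)
      have hq : HasDerivAt (fun t : ℝ => C * t) C w := by
        simpa using (hasDerivAt_id w).const_mul C
      have : deriv^[2] (fun t => u₂ i t + C / 2 * t ^ 2) w
          = deriv (deriv (u₂ i)) w + C := by
        simp only [Function.iterate_succ, Function.iterate_zero, Function.comp_apply, id_eq]
        rw [heq.deriv_eq, deriv_fun_add hdw2 hq.differentiableAt, hq.deriv]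
      rw [this]
      have := abs_le.1 (hu₂bdd i w hw)
      linarith [this.1]
  have hconv : ConvexOn ℝ Ω (fun t => u₁ i t + (u₂ i t + C / 2 * t ^ 2)) :=
    (hu₁conv i).add hgconv
  have hcv := hconv.2 hx hy hl0 hl1' (by ring : l + (1 - l) = 1)
  simp only [smul_eq_mul] at hcv
  have hmin : l * (1 - l) ≤ min l (1 - l) := by
    rcases le_total l (1 - l) with h | h
    · rw [min_eq_left h]; nlinarith
    · rw [min_eq_right h]; nlinarith
  have h1 : C / 2 * (l * (1 - l)) * (x - y) ^ 2 ≤ C * min l (1 - l) * (x - y) ^ 2 := by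
    nlinarith [mul_le_mul_of_nonneg_left hmin (mul_nonneg hC (sq_nonneg (x - y))),
      mul_nonneg (mul_nonneg hC (mul_nonneg hl0 hl1')) (sq_nonneg (x - y))]
  have key : u₁ i (l * x + (1 - l) * y) + u₂ i (l * x + (1 - l) * y)
      ≤ l * (u₁ i x + u₂ i x) + (1 - l) * (u₁ i y + u₂ i y)
      + C * min l (1 - l) * (x - y) ^ 2 := by
    nlinarith [hcv, h1]
  have hcoord : (l • f x + (1 - l) • f y + (C * min l (1 - l) * |x - y| ^ 2) • k
        - f (l * x + (1 - l) * y)) i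
      = l * f x i + (1 - l) * f y i + (C * min l (1 - l) * |x - y| ^ 2) * k i
        - f (l * x + (1 - l) * y) i := by
    simp
  rw [hcoord, hf x hx i, hf y hy i, hf _ hz i, sq_abs]
  nlinarith [mul_le_mul_of_nonneg_right key (hk i)]
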